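/- Let A be a unital C*-algebra and let ρ be a state on A. Then ρ is a character (i.e., ρ is multiplicative: ρ(xy) = ρ(x)ρ(y) for all x, y ∈ A) if and only if |ρ(u)| = 1 for every unitary u in A. -/

import Mathlib

open scoped ComplexOrder

lemma selfAdjoint_eq_unitary_avg {A : Type*} [CStarAlgebra A] [Nontrivial A]
    {a : A} (ha : IsSelfAdjoint a) (hnorm : ‖a‖ ≤ 1) :
    ∃ u ∈ unitary A, a = (2⁻¹ : ℂ) • ((u : A) + star u) := by
  have hna : IsStarNormal a := ha.isStarNormal
  set f : ℂ → ℂ := fun z => (z.re : ℂ) + Complex.I * (Real.sqrt (1 - z.re ^ 2) : ℝ) with hfdef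
  have hf : Continuous f := by fun_prop
  have hstz : ∀ z : ℂ, star (f z) = (z.re : ℂ) - Complex.I * (Real.sqrt (1 - z.re ^ 2) : ℝ) := by
    intro z
    show (starRingEnd ℂ) (f z) = _
    simp only [hfdef, map_add, map_mul, Complex.conj_ofReal, Complex.conj_I]
    ring
  have hsp : ∀ z ∈ spectrum ℂ a, z.re ^ 2 ≤ 1 := by
    intro z hz
    have h1 : |z.re| ≤ ‖z‖ := Complex.abs_re_le_norm z
    have h2 : ‖z‖ ≤ ‖a‖ := spectrum.norm_le_norm_of_mem hz
    have : |z.re| ≤ 1 := by linarith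
    nlinarith [abs_nonneg z.re, sq_abs z.re]
  have key : ∀ z ∈ spectrum ℂ a, star (f z) * f z = 1 := by
    intro z hz
    have h3 : ((Real.sqrt (1 - z.re ^ 2) : ℝ) : ℂ) ^ 2 = ((1 : ℂ) - (z.re : ℂ) ^ 2) := by
      have h2 : Real.sqrt (1 - z.re ^ 2) ^ 2 = 1 - z.re ^ 2 :=
        Real.sq_sqrt (by linarith [hsp z hz])
      rw [← Complex.ofReal_pow, h2]; push_cast; ring
    rw [hstz z, hfdef]
    linear_combination h3 - ((Real.sqrt (1 - z.re ^ 2) : ℝ) : ℂ) ^ 2 * Complex.I_sq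
  have hu : cfc f a ∈ unitary A := (cfc_unitary_iff f a hna hf.continuousOn).mpr key
  refine ⟨cfc f a, hu, ?_⟩
  have hstar : star (cfc f a) = cfc (fun z => star (f z)) a := (cfc_star f a).symm
  rw [hstar, ← cfc_add (a := a) f _ hf.continuousOn (by fun_prop)]
  have hres := ha.spectrumRestricts
  have h2a : cfc (fun z => f z + star (f z)) a = cfc (fun z : ℂ => (2 : ℂ) * z) a := by
    apply cfc_congr
    intro z hz
    have hzre : ((z.re : ℝ) : ℂ) = z := hres.rightInvOn hz
    show f z + star (f z) = 2 * z
    rw [hstz z, hfdef]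
    dsimp only
    linear_combination (2 : ℂ) * hzre
  rw [h2a, cfc_const_mul_id _ a hna, smul_smul]
  norm_num

section test
variable (A : Type*) [CStarAlgebra A] (ρ : A →ₗ[ℂ] ℂ) (hρ1 : ρ 1 = 1)
  (hρpos : ∀ a : A, 0 ≤ ρ (star a * a))

include hρpos in
lemma test_im : ∀ a : A, (ρ (star a * a)).im = 0 := by
  intro a
  have := hρpos a
  rw [Complex.le_def] at this
  simpa using this.2.symm

include hρpos in
lemma test_expand : ∀ c d : A, ρ (star (c + d) * (c + d)) =
    ρ (star c * c) + ρ (star c * d) + ρ (star d * c) + ρ (star d * d) := by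
  intro c d
  rw [star_add, add_mul, mul_add, mul_add, map_add, map_add, map_add]
  ring

include hρpos in
lemma test_herm : ∀ a b : A, ρ (star b * a) = (starRingEnd ℂ) (ρ (star a * b)) := by
  intro a b
  have him := test_im A ρ hρpos
  have expand := test_expand A ρ hρpos
  have h1 : (ρ (star a * b)).im + (ρ (star b * a)).im = 0 := by
    have h := him (a + b)
    rw [expand a b] at h
    simpa [him a, him b] using h
  have h2 : (ρ (star a * b)).re - (ρ (star b * a)).re = 0 := by
    have h := him (Complex.I • a + b)
    rw [expand (Complex.I • a) b] at h
    have e1 : star (Complex.I • a) * (Complex.I • a) = star a * a := by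
      simp [star_smul, smul_mul_assoc, mul_smul_comm, smul_smul, Complex.conj_I]
    have e2 : star (Complex.I • a) * b = -Complex.I • (star a * b) := by
      simp [star_smul, smul_mul_assoc, Complex.conj_I]
    have e3 : star b * (Complex.I • a) = Complex.I • (star b * a) := by
      simp [mul_smul_comm]
    rw [e1, e2, e3, map_smul, map_smul] at h
    simp only [Complex.add_im, him a, him b, smul_eq_mul, Complex.mul_im,
      Complex.neg_re, Complex.I_re, Complex.neg_im, Complex.I_im] at h
    linarith [h]
  rw [Complex.ext_iff]
  constructor
  · simp only [Complex.conj_re]; linarith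
  · simp only [Complex.conj_im]; linarith

end test

section test2
variable (A : Type*) [CStarAlgebra A] (ρ : A →ₗ[ℂ] ℂ)
  (hρpos : ∀ a : A, 0 ≤ ρ (star a * a))

include hρpos in
lemma test_cs : ∀ c : A, ρ (star c * c) = 0 → ∀ b : A, ρ (star b * c) = 0 := by
  intro c hc b
  have herm := test_herm A ρ hρpos
  set z := ρ (star b * c) with hz
  have key : ∀ s : ℝ, 0 ≤ (ρ (star b * b)).re - 2 * s * Complex.normSq z := by
    intro s
    set t : ℂ := (s : ℂ) * (starRingEnd ℂ) z with ht
    have expand : ρ (star (b - t • c) * (b - t • c)) =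
        ρ (star b * b) - t * ρ (star b * c) - (starRingEnd ℂ) t * ρ (star c * b)
          + (starRingEnd ℂ) t * t * ρ (star c * c) := by
      simp only [star_sub, star_smul, sub_mul, mul_sub, smul_mul_assoc, mul_smul_comm,
        map_sub, map_smul, smul_eq_mul, smul_smul, Complex.star_def]
      ring
    have hcb : ρ (star c * b) = (starRingEnd ℂ) z := herm b c
    have hct : (starRingEnd ℂ) t = (s : ℂ) * z := by
      rw [ht, map_mul, Complex.conj_conj, Complex.conj_ofReal]
    have hval : ρ (star b * b) - t * z - (starRingEnd ℂ) t * (starRingEnd ℂ) z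
        + (starRingEnd ℂ) t * t * 0
        = ρ (star b * b) - ((2 * s * Complex.normSq z : ℝ) : ℂ) := by
      rw [hct, ht]
      push_cast
      linear_combination (-2 * (s : ℂ)) * Complex.mul_conj z
    have hpos := hρpos (b - t • c)
    rw [expand, hc, hcb, hval] at hpos
    have h0 := (Complex.le_def.mp hpos).1
    simp only [Complex.zero_re, Complex.sub_re, Complex.ofReal_re] at h0
    linarith
  have hns : Complex.normSq z = 0 := by
    by_contra h
    have hpos' : 0 < Complex.normSq z := lt_of_le_of_ne (Complex.normSq_nonneg z) (Ne.symm h)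
    have hk := key (((ρ (star b * b)).re + 1) / (2 * Complex.normSq z))
    have he : 2 * (((ρ (star b * b)).re + 1) / (2 * Complex.normSq z)) * Complex.normSq z
        = (ρ (star b * b)).re + 1 := by
      field_simp
    rw [he] at hk
    linarith
  exact Complex.normSq_eq_zero.mp hns
end test2

/-- Let `A` be a unital C*-algebra and let `ρ` be a state on `A`
(a linear functional with `ρ 1 = 1` and `ρ (a* a) ≥ 0` for all `a`).  Then `ρ` is a
character, i.e. multiplicative, if and only if `|ρ(u)| = 1` for every unitary `u` in `A`. -/
theorem state_isMultiplicative_iff_norm_one_on_unitaries (A : Type*) [CStarAlgebra A]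
    (ρ : A →ₗ[ℂ] ℂ) (hρ1 : ρ 1 = 1) (hρpos : ∀ a : A, 0 ≤ ρ (star a * a)) :
    (∀ x y : A, ρ (x * y) = ρ x * ρ y) ↔ (∀ u : unitary A, ‖ρ u‖ = 1) := by
  have herm := test_herm A ρ hρpos
  have hstar : ∀ a : A, ρ (star a) = (starRingEnd ℂ) (ρ a) := by
    intro a
    have h := herm a 1
    simp only [star_one, one_mul, mul_one] at h
    have h2 := congrArg (starRingEnd ℂ) h
    rw [Complex.conj_conj] at h2
    exact h2.symm
  have hnt : Nontrivial A := by
    refine ⟨⟨1, 0, fun h => ?_⟩⟩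
    apply one_ne_zero (α := ℂ)
    rw [← hρ1, h, map_zero]
  constructor
  · intro hmul u
    have h1 : (starRingEnd ℂ) (ρ u) * ρ u = 1 := by
      rw [← hstar, ← hmul (star (u : A)) (u : A),
        Unitary.star_mul_self_of_mem u.prop, hρ1]
    have h2 : Complex.normSq (ρ u) = 1 := by
      rw [mul_comm] at h1
      rw [Complex.mul_conj] at h1
      exact_mod_cast h1
    have h3 : ‖ρ (u : A)‖ ^ 2 = 1 := by
      rw [Complex.sq_norm, h2]
    nlinarith [norm_nonneg (ρ (u : A))]
  · intro hu x y
    have cs := test_cs A ρ hρpos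
    -- multiplicativity against unitaries
    have humul : ∀ (x u : A), u ∈ unitary A → ρ (x * u) = ρ x * ρ u := by
      intro x u hmem
      set c : ℂ := ρ u with hcdef
      have hnsq : (starRingEnd ℂ) c * c = 1 := by
        have h1 : ‖c‖ = 1 := hu ⟨u, hmem⟩
        have h2 : c * (starRingEnd ℂ) c = Complex.normSq c := Complex.mul_conj c
        have h3 : Complex.normSq c = 1 := by
          rw [Complex.normSq_eq_norm_sq, h1]; norm_num
        rw [mul_comm, h2, h3]; norm_num
      have e : star (u - c • 1) * (u - c • 1)
          = star u * u - c • star u - (starRingEnd ℂ) c • u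
            + ((starRingEnd ℂ) c * c) • (1 : A) := by
        simp only [star_sub, star_smul, star_one, sub_mul, mul_sub, smul_mul_assoc,
          mul_smul_comm, one_mul, mul_one, smul_smul, Complex.star_def]
        module
      have hn0 : ρ (star (u - c • 1) * (u - c • 1)) = 0 := by
        rw [e, Unitary.star_mul_self_of_mem hmem, hnsq]
        rw [map_add, map_sub, map_sub, map_smul, map_smul, map_smul, hρ1,
          hstar u, one_smul, smul_eq_mul, smul_eq_mul, ← hcdef]
        ring_nf
        rw [mul_comm c ((starRingEnd ℂ) c), hnsq]
        ring
      have h4 := cs _ hn0 (star x)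
      rw [star_star, mul_sub, mul_smul_comm, mul_one, map_sub, map_smul] at h4
      rw [sub_eq_zero] at h4
      rw [h4, smul_eq_mul, mul_comm]
    -- every element lies in the span of the unitaries
    have hsa_mem : ∀ a : A, IsSelfAdjoint a →
        a ∈ Submodule.span ℂ ((unitary A : Set A)) := by
      intro a hsa
      rcases eq_or_ne a 0 with rfl | hne
      · exact zero_mem _
      · set c : A := ((‖a‖⁻¹ : ℝ) : ℂ) • a with hcdef
        have hnorm_ne : (‖a‖ : ℝ) ≠ 0 := norm_ne_zero_iff.mpr hne
        have hc_sa : IsSelfAdjoint c := by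
          rw [hcdef, IsSelfAdjoint, star_smul, Complex.star_def, Complex.conj_ofReal,
            hsa.star_eq]
        have hc_norm : ‖c‖ ≤ 1 := by
          rw [hcdef, norm_smul, Complex.norm_real, Real.norm_eq_abs,
            abs_of_nonneg (inv_nonneg.mpr (norm_nonneg a)), inv_mul_cancel₀ hnorm_ne]
        obtain ⟨v, hv, hveq⟩ := selfAdjoint_eq_unitary_avg hc_sa hc_norm
        have hcmem : c ∈ Submodule.span ℂ ((unitary A : Set A)) := by
          rw [hveq]
          exact Submodule.smul_mem _ _ (Submodule.add_mem _
            (Submodule.subset_span hv)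
            (Submodule.subset_span (Unitary.star_mem hv)))
        have ha_eq : a = ((‖a‖ : ℝ) : ℂ) • c := by
          rw [hcdef, smul_smul, ← Complex.ofReal_mul, mul_inv_cancel₀ hnorm_ne]
          simp
        rw [ha_eq]
        exact Submodule.smul_mem _ _ hcmem
    have hspan : ∀ w : A, w ∈ Submodule.span ℂ ((unitary A : Set A)) := by
      intro w
      have h1 : IsSelfAdjoint ((2⁻¹ : ℂ) • (w + star w)) := by
        rw [IsSelfAdjoint, star_smul, star_add, star_star, Complex.star_def,
          map_inv₀, map_ofNat, add_comm (star w) w]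
      have h2 : IsSelfAdjoint ((-(Complex.I) / 2) • (w - star w)) := by
        rw [IsSelfAdjoint, star_smul, star_sub, star_star, Complex.star_def]
        simp only [map_div₀, map_neg, Complex.conj_I, map_ofNat]
        match_scalars <;> simp <;> ring
      have hw : w = (2⁻¹ : ℂ) • (w + star w)
          + Complex.I • ((-(Complex.I) / 2) • (w - star w)) := by
        rw [smul_smul]
        match_scalars <;> simp [Complex.ext_iff] <;> ring
      rw [hw]
      exact Submodule.add_mem _ (hsa_mem _ h1)
        (Submodule.smul_mem _ _ (hsa_mem _ h2))
    refine Submodule.span_induction (p := fun z _ => ρ (x * z) = ρ x * ρ z)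
      ?_ ?_ ?_ ?_ (hspan y)
    · intro u hu'
      exact humul x u hu'
    · simp
    · intro z w _ _ hz hw
      rw [mul_add, map_add, map_add, hz, hw]
      ring
    · intro t z _ hz
      rw [mul_smul_comm, map_smul, map_smul, hz, smul_eq_mul, smul_eq_mul]
      ring
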